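/- Phase-flip example separating the two information–disturbance bounds: let 𝟙 ∈ I be the all-ones string, e₀ a fixed unit vector of ℂ^M, and define E i j := (if i = j then (-1)^{i·𝟙} else 0) • e₀. Then E is an attack (satisfies the unitarity condition); its conjugate-basis error distribution is deterministic, p̄(c) = if c = 𝟙 then 1 else 0, so that H(A⊕B|b̄) = 0 while the error probability δ := ∑_{c ≠ 0} p̄(c) equals 1; and for every POVM X on ℂ^M, Eve's information gain vanishes: I(A:E[X]|b) = 0. -/

import Mathlib

open scoped ComplexInnerProductSpace ComplexOrder
open Finset

namespace IDT

/-- N-bit strings. -/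
abbrev Bits (N : ℕ) := Fin N → ZMod 2

/-- Bitwise dot product `i·k := ∑ n i_n k_n` (lifting bits to naturals). -/
def bdot {N : ℕ} (i k : Bits N) : ℕ := ∑ n, (i n).val * (k n).val

/-- Eve's attack: unitarity condition on the family of vectors. -/
def Attack {N M : ℕ} (E : Bits N → Bits N → EuclideanSpace ℂ (Fin M)) : Prop :=
  ∀ i k : Bits N, (∑ j : Bits N, ⟪E i j, E k j⟫) = if i = k then 1 else 0

/-- Conjugate-basis vectors `Ē l s := 2^{-N} ∑_{i,j} (-1)^{s·j + i·l} E i j`. -/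
noncomputable def Ebar {N M : ℕ} (E : Bits N → Bits N → EuclideanSpace ℂ (Fin M))
    (l s : Bits N) : EuclideanSpace ℂ (Fin M) :=
  (2 ^ N : ℂ)⁻¹ • ∑ i : Bits N, ∑ j : Bits N, ((-1 : ℂ) ^ (bdot s j + bdot i l)) • E i j

/-- Error distribution of Bob's conjugate-basis outcome. -/
noncomputable def pbar {N M : ℕ} (E : Bits N → Bits N → EuclideanSpace ℂ (Fin M))
    (c : Bits N) : ℝ :=
  (2 ^ N : ℝ)⁻¹ * ∑ i : Bits N, ‖Ebar E i (i + c)‖ ^ 2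

/-- `-x log₂ x` (with the convention `0 log₂ 0 = 0`). -/
noncomputable def ent2 (x : ℝ) : ℝ := -(x * Real.logb 2 x)

/-- A POVM on `ℂ^M` with finite outcome set `A`. -/
structure POVM (A : Type*) [Fintype A] (M : ℕ) where
  X : A → Matrix (Fin M) (Fin M) ℂ
  posSemidef : ∀ a : A, (X a).PosSemidef
  sum_one : ∑ a : A, X a = 1

/-- Eve's outcome probability `p(α|i)`. -/
noncomputable def pOut {N M : ℕ} {A : Type*} [Fintype A]
    (E : Bits N → Bits N → EuclideanSpace ℂ (Fin M)) (P : POVM A M) (a : A) (i : Bits N) : ℝ :=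
  (∑ j : Bits N, ⟪E i j, Matrix.toEuclideanLin (P.X a) (E i j)⟫).re

/-- (base-2) Shannon mutual information of a joint distribution. -/
noncomputable def mutualInfo {S T : Type*} [Fintype S] [Fintype T] (p : S → T → ℝ) : ℝ :=
  (∑ s, ent2 (∑ t, p s t)) + (∑ t, ent2 (∑ s, p s t)) - ∑ s, ∑ t, ent2 (p s t)

/-- Eve's information gain `I(A:E[X]|b)`. -/
noncomputable def infoGain {N M : ℕ} {A : Type*} [Fintype A]
    (E : Bits N → Bits N → EuclideanSpace ℂ (Fin M)) (P : POVM A M) : ℝ :=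
  mutualInfo (fun (i : Bits N) (a : A) => (2 ^ N : ℝ)⁻¹ * pOut E P a i)

/-- Elementary tensor of two Euclidean-space vectors. -/
noncomputable def tens {α β : Type*} (u : EuclideanSpace ℂ α) (v : EuclideanSpace ℂ β) :
    EuclideanSpace ℂ (α × β) :=
  (WithLp.equiv 2 ((α × β) → ℂ)).symm (fun p => u p.1 * v p.2)

/-- Symmetrized attack vectors. -/
noncomputable def Es {N M : ℕ} (E : Bits N → Bits N → EuclideanSpace ℂ (Fin M))
    (i j : Bits N) : EuclideanSpace ℂ (Bits N × Fin M) :=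
  (((Real.sqrt (2 ^ N))⁻¹ : ℝ) : ℂ) •
    ∑ m : Bits N, ((-1 : ℂ) ^ bdot m (i + j)) • tens (EuclideanSpace.single m 1) (E (i + m) (j + m))

/-- The operator `|e_m⟩⟨e_m| ⊗ X` as a matrix on `ℂ^{2^N} ⊗ ℂ^M`. -/
def projTens {N M : ℕ} (m : Bits N) (X : Matrix (Fin M) (Fin M) ℂ) :
    Matrix (Bits N × Fin M) (Bits N × Fin M) ℂ :=
  Matrix.of fun p q => (if p.1 = m ∧ q.1 = m then 1 else 0) * X p.2 q.2

/-- Purification vectors `φ_i`. -/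
noncomputable def phi {N M : ℕ} (E : Bits N → Bits N → EuclideanSpace ℂ (Fin M))
    (i : Bits N) : EuclideanSpace ℂ ((Bits N × Fin M) × Bits N) :=
  ∑ j : Bits N, tens (Es E i j) (EuclideanSpace.single (i + j) 1)

/-- Rank-one projection `|ψ⟩⟨ψ|` as a matrix. -/
noncomputable def outer {α : Type*} (ψ : EuclideanSpace ℂ α) : Matrix α α ℂ :=
  Matrix.of fun x y => ψ x * star (ψ y)

/-- Partial trace over the second tensor factor. -/
noncomputable def ptraceSnd {α β : Type*} [Fintype β] (Θ : Matrix (α × β) (α × β) ℂ) : Matrix α α ℂ :=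
  Matrix.of fun i j => ∑ b : β, Θ (i, b) (j, b)

/-- Partial trace over the first tensor factor. -/
noncomputable def ptraceFst {α β : Type*} [Fintype α] (Θ : Matrix (α × β) (α × β) ℂ) : Matrix β β ℂ :=
  Matrix.of fun x y => ∑ a : α, Θ (a, x) (a, y)

-- von Neumann entropy (base 2) of a Hermitian matrix (junk value `0` otherwise).
open Classical in
noncomputable def vN {n : Type*} [Fintype n] [DecidableEq n] (ρ : Matrix n n ℂ) : ℝ :=
  if h : ρ.IsHermitian then ∑ i, ent2 (h.eigenvalues i) else 0

/-- Classical–quantum state `∑ i p_i |e_i⟩⟨e_i| ⊗ ρ_i`. -/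
def cqState {F G : Type*} [DecidableEq F] (p : F → ℝ) (ρ : F → Matrix G G ℂ) :
    Matrix (F × G) (F × G) ℂ :=
  Matrix.of fun x y => if x.1 = y.1 then (p x.1 : ℂ) * ρ x.1 x.2 y.2 else 0



section Aux
open Finset

lemma ent2_mul' {x : ℝ} (hx : x ≠ 0) (y : ℝ) :
    ent2 (x * y) = y * ent2 x + x * ent2 y := by
  rcases eq_or_ne y 0 with h | h
  · simp [h, ent2]
  · unfold ent2; rw [Real.logb_mul hx h]; ring

lemma chi_add (a b : ZMod 2) : ((-1 : ℂ)) ^ (a + b).val = (-1) ^ a.val * (-1) ^ b.val := by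
  rw [ZMod.val_add, ← neg_one_pow_eq_pow_mod_two, pow_add]

lemma chi_mul (a b : ZMod 2) : ((-1 : ℂ)) ^ (a * b).val = (-1) ^ (a.val * b.val) := by
  rw [ZMod.val_mul, ← neg_one_pow_eq_pow_mod_two]

lemma bdot_comm {N : ℕ} (i k : Bits N) : bdot i k = bdot k i := by
  unfold bdot; exact Finset.sum_congr rfl fun n _ => mul_comm _ _

lemma pow_bdot_prod {N : ℕ} (s i : Bits N) :
    ((-1 : ℂ)) ^ bdot s i = ∏ n, (-1 : ℂ) ^ ((s n).val * (i n).val) := by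
  unfold bdot; rw [← Finset.prod_pow_eq_pow_sum]

lemma pow_bdot_add {N : ℕ} (s t i : Bits N) :
    ((-1 : ℂ)) ^ bdot (s + t) i = (-1) ^ bdot s i * (-1) ^ bdot t i := by
  rw [pow_bdot_prod, pow_bdot_prod, pow_bdot_prod, ← Finset.prod_mul_distrib]
  refine Finset.prod_congr rfl fun n _ => ?_
  have h1 : (s + t) n * i n = s n * i n + t n * i n := by simp [add_mul]
  rw [← chi_mul, h1, chi_add, chi_mul, chi_mul]

lemma charSum {N : ℕ} (t : Bits N) :
    (∑ i : Bits N, ((-1 : ℂ)) ^ bdot t i) = if t = 0 then (2 ^ N : ℂ) else 0 := by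
  by_cases h : t = 0
  · subst h
    have h0 : ∀ i : Bits N, bdot (0 : Bits N) i = 0 := by intro i; simp [bdot]
    simp [h0, Finset.card_univ]
  · rw [if_neg h]
    calc (∑ i : Bits N, ((-1 : ℂ)) ^ bdot t i)
        = ∑ i : Bits N, ∏ n, (-1 : ℂ) ^ ((t n).val * ((i n)).val) :=
          Finset.sum_congr rfl fun i _ => pow_bdot_prod t i
      _ = ∏ n, ∑ b : ZMod 2, (-1 : ℂ) ^ ((t n).val * b.val) :=
          (Fintype.prod_sum (fun (n : Fin N) (b : ZMod 2) => (-1 : ℂ) ^ ((t n).val * b.val))).symm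
      _ = 0 := by
          obtain ⟨n, hn⟩ : ∃ n, t n ≠ 0 := by
            by_contra hc; push_neg at hc; exact h (funext hc)
          apply Finset.prod_eq_zero (Finset.mem_univ n)
          have h1 : t n = 1 := by
            have := ZMod.val_lt (t n)
            interval_cases hv : (t n).val
            · exact absurd ((ZMod.val_eq_zero _).mp hv) hn
            · exact (ZMod.val_eq_one (by norm_num) _).mp hv
          rw [h1, show (Finset.univ : Finset (ZMod 2)) = {0, 1} from rfl,
            Finset.sum_pair (by decide : (0 : ZMod 2) ≠ 1)]
          norm_num [show ZMod.val (1 : ZMod 2) = 1 from rfl, show ZMod.val (0 : ZMod 2) = 0 from rfl]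

end Aux

/-- Phase-flip example: deterministic conjugate-basis error (`δ = 1`) but zero entropy and zero
information gain for Eve. -/
theorem phase_flip_example {N M : ℕ} (hN : 1 ≤ N)
    (v : EuclideanSpace ℂ (Fin M)) (hv : ‖v‖ = 1)
    (ones : Bits N) (hones : ones = fun _ => 1)
    (E : Bits N → Bits N → EuclideanSpace ℂ (Fin M))
    (hEdef : E = fun i j => (if i = j then ((-1 : ℂ) ^ bdot i ones) else 0) • v) :
    Attack E
    ∧ (∀ c : Bits N, pbar E c = if c = ones then 1 else 0)
    ∧ (∑ c : Bits N, ent2 (pbar E c)) = 0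
    ∧ (∑ c ∈ Finset.univ.filter (fun c : Bits N => c ≠ 0), pbar E c) = 1
    ∧ ∀ (A : Type) [Fintype A] (P : POVM A M), infoGain E P = 0 := by
  subst hones hEdef
  set ones : Bits N := (fun _ => 1) with honesdef
  set E : Bits N → Bits N → EuclideanSpace ℂ (Fin M) :=
    fun i j => (if i = j then ((-1 : ℂ) ^ bdot i ones) else 0) • v with hEdef
  have hvv : ⟪v, v⟫ = 1 := by
    rw [inner_self_eq_norm_sq_to_K, hv]; norm_num
  set c : Bits N → ℂ := fun i => (-1 : ℂ) ^ bdot i ones with hc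
  have hcc : ∀ i, (starRingEnd ℂ) (c i) * c i = 1 := by
    intro i
    simp only [hc, map_pow, map_neg, map_one]
    rw [← pow_add]
    exact Even.neg_one_pow ⟨_, rfl⟩
  have hE : ∀ i j, E i j = (if i = j then c i else 0) • v := fun i j => rfl
  have hAtt : Attack E := by
    intro i k
    by_cases hik : i = k
    · subst hik
      rw [if_pos rfl, Finset.sum_eq_single i]
      · rw [hE, if_pos rfl, inner_smul_left, inner_smul_right, hvv, mul_one, hcc]
      · intro j _ hj
        rw [hE, if_neg (fun h => hj h.symm), zero_smul, inner_zero_left]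
      · intro h; exact absurd (Finset.mem_univ i) h
    · rw [if_neg hik]
      apply Finset.sum_eq_zero; intro j _
      by_cases hij : i = j
      · rw [hE k j, if_neg (fun h => hik (hij.trans h.symm)), zero_smul, inner_zero_right]
      · rw [hE i j, if_neg hij, zero_smul, inner_zero_left]
  have hneg : ∀ x : Bits N, -x = x := by
    intro x; funext n; rw [Pi.neg_apply]; exact CharTwo.neg_eq _
  have hEbar : ∀ l s : Bits N, Ebar E l s = (if s = l + ones then (1 : ℂ) else 0) • v := by
    intro l s
    unfold Ebar
    have hterm : ∀ i j : Bits N, ((-1 : ℂ) ^ (bdot s j + bdot i l)) • E i j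
        = (if i = j then (-1 : ℂ) ^ bdot (s + (l + ones)) i else 0) • v := by
      intro i j
      by_cases h : i = j
      · subst h
        rw [hE, if_pos rfl, if_pos rfl, smul_smul]
        congr 1
        calc ((-1 : ℂ)) ^ (bdot s i + bdot i l) * c i
            = (-1) ^ bdot s i * ((-1) ^ bdot l i * (-1) ^ bdot ones i) := by
              simp only [hc, pow_add, bdot_comm i l, bdot_comm i ones]; ring
          _ = (-1) ^ bdot (s + (l + ones)) i := by rw [pow_bdot_add, pow_bdot_add]
      · rw [hE, if_neg h, if_neg h]; simp
    have h1 : ∀ i : Bits N, (∑ j : Bits N, ((-1 : ℂ) ^ (bdot s j + bdot i l)) • E i j)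
        = ((-1 : ℂ) ^ bdot (s + (l + ones)) i) • v := by
      intro i
      rw [Finset.sum_congr rfl (fun j _ => hterm i j)]
      calc (∑ j : Bits N, (if i = j then (-1 : ℂ) ^ bdot (s + (l + ones)) i else 0) • v)
          = ∑ j : Bits N, (if i = j then ((-1 : ℂ) ^ bdot (s + (l + ones)) i) • v else 0) := by
            refine Finset.sum_congr rfl fun j _ => ?_
            split <;> simp
        _ = ((-1 : ℂ) ^ bdot (s + (l + ones)) i) • v := by
            rw [Finset.sum_ite_eq]; simp
    rw [Finset.sum_congr rfl (fun i _ => h1 i), ← Finset.sum_smul, charSum, smul_smul]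
    congr 1
    by_cases h : s = l + ones
    · rw [if_pos, if_pos h]
      · exact inv_mul_cancel₀ (by positivity)
      · rw [h]; exact add_eq_zero_iff_eq_neg.mpr (hneg _).symm
    · rw [if_neg, if_neg h, mul_zero]
      intro h0
      exact h (by rw [← hneg (l + ones)]; exact eq_neg_of_add_eq_zero_left h0)
  have hpbar : ∀ cc : Bits N, pbar E cc = if cc = ones then 1 else 0 := by
    intro cc
    unfold pbar
    have hIff : ∀ i : Bits N, (i + cc = i + ones) ↔ (cc = ones) := fun i => add_right_inj i
    have h2 : ∀ i : Bits N, ‖Ebar E i (i + cc)‖ ^ 2 = if cc = ones then 1 else 0 := by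
      intro i
      rw [hEbar]
      by_cases h : cc = ones
      · rw [if_pos ((hIff i).mpr h), if_pos h, one_smul, hv]; norm_num
      · rw [if_neg (fun hh => h ((hIff i).mp hh)), if_neg h, zero_smul, norm_zero]; norm_num
    rw [Finset.sum_congr rfl fun i _ => h2 i, Finset.sum_const, Finset.card_univ]
    have hcard : Fintype.card (Bits N) = 2 ^ N := by simp
    rw [hcard, nsmul_eq_mul]
    by_cases h : cc = ones
    · push_cast; field_simp
    · simp
  have hones0 : ones ≠ 0 := by
    intro h0
    exact one_ne_zero (congrFun h0 ⟨0, hN⟩)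
  refine ⟨hAtt, hpbar, ?_, ?_, ?_⟩
  · simp [hpbar, apply_ite ent2, ent2]
  · rw [Finset.sum_congr rfl (fun cc _ => hpbar cc), Finset.sum_ite_eq' _ ones (fun _ => (1 : ℝ))]
    simp [hones0]
  · intro A _ P
    set q : A → ℝ := fun a => (⟪v, Matrix.toEuclideanLin (P.X a) v⟫).re with hqdef
    have hq : ∀ a i, pOut E P a i = q a := by
      intro a i
      unfold pOut
      rw [Finset.sum_eq_single i]
      · rw [hE, if_pos rfl, map_smul, inner_smul_left, inner_smul_right, ← mul_assoc, hcc i,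
          one_mul]
      · intro j _ hj
        rw [hE, if_neg (fun h => hj h.symm), zero_smul, map_zero, inner_zero_right]
      · intro h; exact absurd (Finset.mem_univ i) h
    have hqsum : ∑ a, q a = 1 := by
      have hz : (∑ a, ⟪v, Matrix.toEuclideanLin (P.X a) v⟫) = ⟪v, v⟫ := by
        rw [← inner_sum]
        congr 1
        calc (∑ a, Matrix.toEuclideanLin (P.X a) v)
            = (∑ a, Matrix.toEuclideanLin (P.X a)) v := (LinearMap.sum_apply _ _ _).symm
          _ = (Matrix.toEuclideanLin (∑ a, P.X a)) v := by rw [map_sum]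
          _ = v := by
              rw [P.sum_one]
              simp [Matrix.toEuclideanLin_apply, Matrix.one_mulVec]
      calc (∑ a, q a) = (∑ a, ⟪v, Matrix.toEuclideanLin (P.X a) v⟫).re := by
            rw [Complex.re_sum]
        _ = 1 := by rw [hz, hvv]; norm_num
    have hIG : infoGain E P = mutualInfo (fun (_ : Bits N) (a : A) => (2 ^ N : ℝ)⁻¹ * q a) := by
      unfold infoGain
      congr 1
      funext i a
      rw [hq]
    rw [hIG]
    unfold mutualInfo
    have h2N : ((2 : ℝ) ^ N) ≠ 0 := by positivity
    have hinv : ((2 : ℝ) ^ N)⁻¹ ≠ 0 := inv_ne_zero h2N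
    have hcard : Fintype.card (Bits N) = 2 ^ N := by simp
    have hT1 : (∑ a, (2 ^ N : ℝ)⁻¹ * q a) = (2 ^ N : ℝ)⁻¹ := by
      rw [← Finset.mul_sum, hqsum, mul_one]
    have hT2 : ∀ a, (∑ _i : Bits N, (2 ^ N : ℝ)⁻¹ * q a) = q a := by
      intro a
      rw [Finset.sum_const, Finset.card_univ, hcard, nsmul_eq_mul]
      push_cast
      field_simp
    have hT3 : (∑ a, ent2 ((2 ^ N : ℝ)⁻¹ * q a))
        = ent2 ((2 ^ N : ℝ)⁻¹) + (2 ^ N : ℝ)⁻¹ * ∑ a, ent2 (q a) := by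
      rw [Finset.sum_congr rfl fun a _ => ent2_mul' hinv (q a), Finset.sum_add_distrib,
        ← Finset.sum_mul, hqsum, one_mul, ← Finset.mul_sum]
    simp only [hT1, hT2, hT3]
    rw [Finset.sum_const, Finset.card_univ, hcard, Finset.sum_const, Finset.card_univ, hcard,
      nsmul_eq_mul, nsmul_eq_mul]
    push_cast
    field_simp
    ring

end IDT
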